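/- Let p be a prime and n a positive integer with gcd(p, 4n) = 1, and let Q_n denote the generalized quaternion (dicyclic) group of order 4n. Then for every multiplicative Lie algebra structure ⋆̃ on G = ℤ_p × Q_n there exists a multiplicative Lie algebra structure ⋆ on Q_n such that (h,x) ⋆̃ (k,y) = (0, x ⋆ y) for all (h,x), (k,y) ∈ G. -/

import Mathlib

/-- A multiplicative Lie algebra structure on a group `G`. -/
def IsMulLieAlgebra {G : Type*} [Group G] (star : G → G → G) : Prop :=
  (∀ x, star x x = 1) ∧
  (∀ x y z, star x (y * z) = star x y * (y * star x z * y⁻¹)) ∧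
  (∀ x y z, star (x * y) z = (x * star y z * x⁻¹) * star x z) ∧
  (∀ x y z,
    star (star x y) (y * z * y⁻¹) * star (star y z) (z * x * z⁻¹) *
      star (star z x) (x * y * x⁻¹) = 1) ∧
  (∀ x y z, z * star x y * z⁻¹ = star (z * x * z⁻¹) (z * y * z⁻¹))

section MLA

variable {G : Type*} [Group G] {s : G → G → G}

lemma mla_one_right (hs : IsMulLieAlgebra s) (x : G) : s x 1 = 1 := by
  have h := hs.2.1 x 1 1
  simp only [one_mul, mul_one, inv_one] at h
  exact (left_eq_mul.mp h)

lemma mla_one_left (hs : IsMulLieAlgebra s) (x : G) : s 1 x = 1 := by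
  have h := hs.2.2.1 1 1 x
  simp only [one_mul, mul_one, inv_one] at h
  exact (right_eq_mul.mp h)

lemma mla_antisymm (hs : IsMulLieAlgebra s) (x y : G) : s y x * s x y = 1 := by
  have h1 : s x (x * y) = x * s x y * x⁻¹ := by
    rw [hs.2.1 x x y, hs.1, one_mul]
  have h2 : s y (x * y) = s y x := by
    rw [hs.2.1 y x y, hs.1]; group
  have h3 : (1 : G) = (x * s y x * x⁻¹) * (x * s x y * x⁻¹) := by
    conv_lhs => rw [← hs.1 (x * y)]
    rw [hs.2.2.1 x y (x * y), h1, h2]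
  have h4 : x * (s y x * s x y) * x⁻¹ = 1 := by
    rw [show x * (s y x * s x y) * x⁻¹
      = (x * s y x * x⁻¹) * (x * s x y * x⁻¹) by group, ← h3]
  exact conj_eq_one_iff.mp h4

/-- powers in the first argument, for central `z`. -/
lemma mla_pow_left (hs : IsMulLieAlgebra s) {z : G} (hz : ∀ g, Commute z g)
    (w : G) (b : ℕ) : s (z ^ b) w = s z w ^ b := by
  induction b with
  | zero => simp [mla_one_left hs]
  | succ b ih =>
    have h := hs.2.2.1 (z ^ b) z w
    rw [← pow_succ] at h
    have hc : z ^ b * s z w * (z ^ b)⁻¹ = s z w := by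
      rw [((hz (s z w)).pow_left b).eq, mul_inv_cancel_right]
    rw [h, hc, ih, ← pow_succ']

/-- powers in the second argument, when the value is central. -/
lemma mla_pow_right (hs : IsMulLieAlgebra s) {a w : G}
    (hc : ∀ g, Commute (s a w) g) (b : ℕ) : s a (w ^ b) = s a w ^ b := by
  induction b with
  | zero => simp [mla_one_right hs]
  | succ b ih =>
    have h := hs.2.1 a (w ^ b) w
    rw [← pow_succ] at h
    have hcc : w ^ b * s a w * (w ^ b)⁻¹ = s a w := by
      rw [← (hc (w ^ b)).eq, mul_inv_cancel_right]
    rw [h, hcc, ih, ← pow_succ]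

end MLA

/-- for a prime `p` and `n ≥ 1` with `gcd(p, 4n) = 1`, every
multiplicative Lie algebra structure `⋆̃` on `G = ℤ_p × Q_n` (with `Q_n` the
generalized quaternion/dicyclic group of order `4n`) comes from a multiplicative
Lie algebra structure `⋆` on `Q_n` via `(h,x) ⋆̃ (k,y) = (0, x ⋆ y)`. -/
theorem zmod_quaternion_n {p n : ℕ} (hp : p.Prime) (hn : 0 < n)
    (hcop : Nat.Coprime p (4 * n))
    (tstar : (Multiplicative (ZMod p) × QuaternionGroup n) →
      (Multiplicative (ZMod p) × QuaternionGroup n) →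
      (Multiplicative (ZMod p) × QuaternionGroup n))
    (htstar : IsMulLieAlgebra tstar) :
    ∃ star : QuaternionGroup n → QuaternionGroup n → QuaternionGroup n,
      IsMulLieAlgebra star ∧
      ∀ (h k : Multiplicative (ZMod p)) (x y : QuaternionGroup n),
        tstar (h, x) (k, y) = (Multiplicative.ofAdd (0 : ZMod p), star x y) := by
  haveI : NeZero n := ⟨hn.ne'⟩
  haveI : NeZero p := ⟨hp.pos.ne'⟩
  -- every element of Multiplicative (ZMod p) has p-th power 1
  have hppow : ∀ a : Multiplicative (ZMod p), a ^ p = 1 := by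
    intro a
    rw [← ofAdd_toAdd a, ← ofAdd_nsmul]
    have : p • a.toAdd = 0 := by
      rw [nsmul_eq_mul, ZMod.natCast_self, zero_mul]
    rw [this, ofAdd_zero]
  -- every element of Q_n has (4n)-th power 1
  have hqpow : ∀ y : QuaternionGroup n, y ^ (4 * n) = 1 := by
    intro y
    rw [← QuaternionGroup.card, pow_card_eq_one]
  -- elements with trivial Q_n component are central
  have hcent : ∀ g : Multiplicative (ZMod p) × QuaternionGroup n, g.2 = 1 → ∀ h : Multiplicative (ZMod p) × QuaternionGroup n, Commute g h := by
    intro g hg h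
    have : g * h = h * g := by
      apply Prod.ext
      · exact mul_comm _ _
      · show g.2 * h.2 = h.2 * g.2
        rw [hg, one_mul, mul_one]
    exact this
  -- if u^p = 1 then u has trivial Q_n component
  have hordp : ∀ u : Multiplicative (ZMod p) × QuaternionGroup n, u ^ p = 1 → u.2 = 1 := by
    intro u hu
    have h2 : u.2 ^ p = 1 := by
      have := congrArg Prod.snd hu
      simpa [Prod.pow_snd] using this
    have hd1 : orderOf u.2 ∣ p := orderOf_dvd_of_pow_eq_one h2
    have hd2 : orderOf u.2 ∣ 4 * n := by
      rw [← QuaternionGroup.card (n := n)]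
      exact orderOf_dvd_card
    have : orderOf u.2 ∣ 1 := hcop ▸ Nat.dvd_gcd hd1 hd2
    rw [Nat.dvd_one] at this
    exact orderOf_eq_one_iff.mp this
  -- central elements (a,1) are central in G
  have hZc : ∀ a : Multiplicative (ZMod p), ∀ g : Multiplicative (ZMod p) × QuaternionGroup n,
      Commute ((a, 1) : Multiplicative (ZMod p) × QuaternionGroup n) g := fun a g => hcent (a, 1) rfl g
  -- (a,1)^p = 1
  have hZp : ∀ a : Multiplicative (ZMod p), ((a, 1) : Multiplicative (ZMod p) × QuaternionGroup n) ^ p = 1 := by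
    intro a
    apply Prod.ext <;> simp [Prod.pow_fst, Prod.pow_snd, hppow a]
  -- step 1: (tstar (a,1) w)^p = 1
  have hstep1 : ∀ (a : Multiplicative (ZMod p)) (w : Multiplicative (ZMod p) × QuaternionGroup n),
      tstar ((a, 1) : Multiplicative (ZMod p) × QuaternionGroup n) w ^ p = 1 := by
    intro a w
    rw [← mla_pow_left htstar (hZc a) w p, hZp a, mla_one_left htstar]
  -- hence values tstar (a,1) w are central
  have hstep2 : ∀ (a : Multiplicative (ZMod p)) (w : Multiplicative (ZMod p) × QuaternionGroup n) (g : Multiplicative (ZMod p) × QuaternionGroup n),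
      Commute (tstar ((a, 1) : Multiplicative (ZMod p) × QuaternionGroup n) w) g := by
    intro a w g
    exact hcent _ (hordp _ (hstep1 a w)) g
  -- tstar (a,1) (1,y) = 1
  have hstep3 : ∀ (a : Multiplicative (ZMod p)) (y : QuaternionGroup n),
      tstar ((a, 1) : Multiplicative (ZMod p) × QuaternionGroup n) ((1, y) : Multiplicative (ZMod p) × QuaternionGroup n) = 1 := by
    intro a y
    set u := tstar ((a, 1) : Multiplicative (ZMod p) × QuaternionGroup n) ((1, y) : Multiplicative (ZMod p) × QuaternionGroup n) with hu
    have h4n : u ^ (4 * n) = 1 := by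
      have hw : ((1, y) : Multiplicative (ZMod p) × QuaternionGroup n) ^ (4 * n) = 1 := by
        apply Prod.ext <;> simp [Prod.pow_fst, Prod.pow_snd, hqpow y]
      rw [hu, ← mla_pow_right htstar (hstep2 a (1, y)) (4 * n), hw,
        mla_one_right htstar]
    have hpp : u ^ p = 1 := hstep1 a (1, y)
    have hd : orderOf u ∣ 1 :=
      hcop ▸ Nat.dvd_gcd (orderOf_dvd_of_pow_eq_one hpp)
        (orderOf_dvd_of_pow_eq_one h4n)
    rw [Nat.dvd_one] at hd
    exact orderOf_eq_one_iff.mp hd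
  -- tstar (a,1) (b,1) = 1
  have hstep4 : ∀ a b : Multiplicative (ZMod p),
      tstar ((a, 1) : Multiplicative (ZMod p) × QuaternionGroup n) ((b, 1) : Multiplicative (ZMod p) × QuaternionGroup n) = 1 := by
    intro a b
    set z₀ : Multiplicative (ZMod p) × QuaternionGroup n := ((Multiplicative.ofAdd (1 : ZMod p), 1) : Multiplicative (ZMod p) × QuaternionGroup n) with hz₀
    have hgen : ∀ c : Multiplicative (ZMod p),
        ((c, 1) : Multiplicative (ZMod p) × QuaternionGroup n) = z₀ ^ (c.toAdd).val := by
      intro c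
      have h1 : (Multiplicative.ofAdd (1 : ZMod p)) ^ (c.toAdd).val = c := by
        rw [← ofAdd_nsmul, nsmul_eq_mul, mul_one, ZMod.natCast_zmod_val,
          ofAdd_toAdd]
      apply Prod.ext <;> simp [hz₀, Prod.pow_fst, Prod.pow_snd, h1]
    rw [hgen a, hgen b,
      mla_pow_left htstar (hZc (Multiplicative.ofAdd (1 : ZMod p))) _ _]
    have : tstar z₀ (z₀ ^ (b.toAdd).val) = 1 := by
      rw [mla_pow_right htstar
        (hstep2 (Multiplicative.ofAdd (1 : ZMod p)) z₀), htstar.1, one_pow]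
    rw [this, one_pow]
  -- key 1: tstar (a,1) w = 1 for all w
  have key1 : ∀ (a : Multiplicative (ZMod p)) (w : Multiplicative (ZMod p) × QuaternionGroup n),
      tstar ((a, 1) : Multiplicative (ZMod p) × QuaternionGroup n) w = 1 := by
    intro a w
    have hw : w = ((w.1, 1) : Multiplicative (ZMod p) × QuaternionGroup n) * ((1, w.2) : Multiplicative (ZMod p) × QuaternionGroup n) := by
      apply Prod.ext <;> simp
    rw [hw, htstar.2.1 ((a, 1) : Multiplicative (ZMod p) × QuaternionGroup n) ((w.1, 1) : Multiplicative (ZMod p) × QuaternionGroup n) ((1, w.2) : Multiplicative (ZMod p) × QuaternionGroup n),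
      hstep4 a w.1, hstep3 a w.2, one_mul, mul_one, mul_inv_cancel]
  -- key 2: tstar w (a,1) = 1 for all w
  have key2 : ∀ (w : Multiplicative (ZMod p) × QuaternionGroup n) (a : Multiplicative (ZMod p)),
      tstar w ((a, 1) : Multiplicative (ZMod p) × QuaternionGroup n) = 1 := by
    intro w a
    have h := mla_antisymm htstar ((a, 1) : Multiplicative (ZMod p) × QuaternionGroup n) w
    rw [key1 a w, mul_one] at h
    exact h
  -- key 3: first component of tstar (1,x) (1,y) is trivial
  have key3 : ∀ x y : QuaternionGroup n,
      (tstar ((1, x) : Multiplicative (ZMod p) × QuaternionGroup n) ((1, y) : Multiplicative (ZMod p) × QuaternionGroup n)).1 = 1 := by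
    intro x y
    -- F w := (tstar (1,x) w).1 is multiplicative
    have hF : ∀ w w' : Multiplicative (ZMod p) × QuaternionGroup n, (tstar ((1, x) : Multiplicative (ZMod p) × QuaternionGroup n) (w * w')).1 =
        (tstar ((1, x) : Multiplicative (ZMod p) × QuaternionGroup n) w).1 * (tstar ((1, x) : Multiplicative (ZMod p) × QuaternionGroup n) w').1 := by
      intro w w'
      have h := congrArg Prod.fst (htstar.2.1 ((1, x) : Multiplicative (ZMod p) × QuaternionGroup n) w w')
      simp only [Prod.fst_mul, Prod.fst_inv] at h
      rw [h, mul_comm w.1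
        ((tstar ((1, x) : Multiplicative (ZMod p) × QuaternionGroup n) w').1),
        mul_inv_cancel_right]
    have hFpow : ∀ (w : Multiplicative (ZMod p) × QuaternionGroup n) (b : ℕ), (tstar ((1, x) : Multiplicative (ZMod p) × QuaternionGroup n) (w ^ b)).1 =
        (tstar ((1, x) : Multiplicative (ZMod p) × QuaternionGroup n) w).1 ^ b := by
      intro w b
      induction b with
      | zero => simp [mla_one_right htstar]
      | succ b ih => rw [pow_succ, hF, ih, pow_succ]
    set u := (tstar ((1, x) : Multiplicative (ZMod p) × QuaternionGroup n) ((1, y) : Multiplicative (ZMod p) × QuaternionGroup n)).1 with hu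
    have h4n : u ^ (4 * n) = 1 := by
      have hw : ((1, y) : Multiplicative (ZMod p) × QuaternionGroup n) ^ (4 * n) = 1 := by
        apply Prod.ext <;> simp [Prod.pow_fst, Prod.pow_snd, hqpow y]
      rw [hu, ← hFpow (1, y) (4 * n), hw, mla_one_right htstar]
      rfl
    have hpp : u ^ p = 1 := hppow u
    have hd : orderOf u ∣ 1 :=
      hcop ▸ Nat.dvd_gcd (orderOf_dvd_of_pow_eq_one hpp)
        (orderOf_dvd_of_pow_eq_one h4n)
    rw [Nat.dvd_one] at hd
    exact orderOf_eq_one_iff.mp hd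
  -- define the star on Q_n
  set star : QuaternionGroup n → QuaternionGroup n → QuaternionGroup n :=
    fun x y => (tstar ((1, x) : Multiplicative (ZMod p) × QuaternionGroup n) ((1, y) : Multiplicative (ZMod p) × QuaternionGroup n)).2 with hstar
  -- the transfer identity
  have htt : ∀ (h k : Multiplicative (ZMod p)) (x y : QuaternionGroup n),
      tstar ((h, x) : Multiplicative (ZMod p) × QuaternionGroup n) ((k, y) : Multiplicative (ZMod p) × QuaternionGroup n) = ((1, star x y) : Multiplicative (ZMod p) × QuaternionGroup n) := by
    intro h k x y
    have h1 : ((h, x) : Multiplicative (ZMod p) × QuaternionGroup n) = ((h, 1) : Multiplicative (ZMod p) × QuaternionGroup n) * ((1, x) : Multiplicative (ZMod p) × QuaternionGroup n) := by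
      apply Prod.ext <;> simp
    have h2 : ((k, y) : Multiplicative (ZMod p) × QuaternionGroup n) = ((k, 1) : Multiplicative (ZMod p) × QuaternionGroup n) * ((1, y) : Multiplicative (ZMod p) × QuaternionGroup n) := by
      apply Prod.ext <;> simp
    have e1 : tstar ((h, x) : Multiplicative (ZMod p) × QuaternionGroup n) ((k, y) : Multiplicative (ZMod p) × QuaternionGroup n)
        = tstar ((1, x) : Multiplicative (ZMod p) × QuaternionGroup n) ((k, y) : Multiplicative (ZMod p) × QuaternionGroup n) := by
      rw [h1, htstar.2.2.1 ((h, 1) : Multiplicative (ZMod p) × QuaternionGroup n) ((1, x) : Multiplicative (ZMod p) × QuaternionGroup n) ((k, y) : Multiplicative (ZMod p) × QuaternionGroup n),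
        key1 h ((k, y) : Multiplicative (ZMod p) × QuaternionGroup n), mul_one,
        ((hZc h (tstar ((1, x) : Multiplicative (ZMod p) × QuaternionGroup n) ((k, y) : Multiplicative (ZMod p) × QuaternionGroup n))).eq), mul_inv_cancel_right]
    have e2 : tstar ((1, x) : Multiplicative (ZMod p) × QuaternionGroup n) ((k, y) : Multiplicative (ZMod p) × QuaternionGroup n)
        = tstar ((1, x) : Multiplicative (ZMod p) × QuaternionGroup n) ((1, y) : Multiplicative (ZMod p) × QuaternionGroup n) := by
      rw [h2, htstar.2.1 ((1, x) : Multiplicative (ZMod p) × QuaternionGroup n) ((k, 1) : Multiplicative (ZMod p) × QuaternionGroup n) ((1, y) : Multiplicative (ZMod p) × QuaternionGroup n),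
        key2 ((1, x) : Multiplicative (ZMod p) × QuaternionGroup n) k, one_mul,
        ((hZc k (tstar ((1, x) : Multiplicative (ZMod p) × QuaternionGroup n) ((1, y) : Multiplicative (ZMod p) × QuaternionGroup n))).eq), mul_inv_cancel_right]
    rw [e1, e2]
    apply Prod.ext
    · exact key3 x y
    · rfl
  refine ⟨star, ⟨?_, ?_, ?_, ?_, ?_⟩, ?_⟩
  · intro x
    have h := congrArg Prod.snd (htstar.1 ((1, x) : Multiplicative (ZMod p) × QuaternionGroup n))
    rw [htt 1 1 x x] at h
    simpa using h
  · intro x y z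
    have e := htstar.2.1 ((1, x) : Multiplicative (ZMod p) × QuaternionGroup n) ((1, y) : Multiplicative (ZMod p) × QuaternionGroup n) ((1, z) : Multiplicative (ZMod p) × QuaternionGroup n)
    rw [show ((1, y) : Multiplicative (ZMod p) × QuaternionGroup n) * ((1, z) : Multiplicative (ZMod p) × QuaternionGroup n) = ((1, y * z) : Multiplicative (ZMod p) × QuaternionGroup n) by
      apply Prod.ext <;> simp] at e
    rw [htt 1 1 x (y * z), htt 1 1 x y, htt 1 1 x z] at e
    have h := congrArg Prod.snd e
    simpa using h
  · intro x y z
    have e := htstar.2.2.1 ((1, x) : Multiplicative (ZMod p) × QuaternionGroup n) ((1, y) : Multiplicative (ZMod p) × QuaternionGroup n) ((1, z) : Multiplicative (ZMod p) × QuaternionGroup n)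
    rw [show ((1, x) : Multiplicative (ZMod p) × QuaternionGroup n) * ((1, y) : Multiplicative (ZMod p) × QuaternionGroup n) = ((1, x * y) : Multiplicative (ZMod p) × QuaternionGroup n) by
      apply Prod.ext <;> simp] at e
    rw [htt 1 1 (x * y) z, htt 1 1 y z, htt 1 1 x z] at e
    have h := congrArg Prod.snd e
    simpa using h
  · intro x y z
    have e := htstar.2.2.2.1 ((1, x) : Multiplicative (ZMod p) × QuaternionGroup n) ((1, y) : Multiplicative (ZMod p) × QuaternionGroup n) ((1, z) : Multiplicative (ZMod p) × QuaternionGroup n)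
    rw [show ((1, y) : Multiplicative (ZMod p) × QuaternionGroup n) * ((1, z) : Multiplicative (ZMod p) × QuaternionGroup n) * ((1, y) : Multiplicative (ZMod p) × QuaternionGroup n)⁻¹
        = ((1, y * z * y⁻¹) : Multiplicative (ZMod p) × QuaternionGroup n) by apply Prod.ext <;> simp,
      show ((1, z) : Multiplicative (ZMod p) × QuaternionGroup n) * ((1, x) : Multiplicative (ZMod p) × QuaternionGroup n) * ((1, z) : Multiplicative (ZMod p) × QuaternionGroup n)⁻¹
        = ((1, z * x * z⁻¹) : Multiplicative (ZMod p) × QuaternionGroup n) by apply Prod.ext <;> simp,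
      show ((1, x) : Multiplicative (ZMod p) × QuaternionGroup n) * ((1, y) : Multiplicative (ZMod p) × QuaternionGroup n) * ((1, x) : Multiplicative (ZMod p) × QuaternionGroup n)⁻¹
        = ((1, x * y * x⁻¹) : Multiplicative (ZMod p) × QuaternionGroup n) by apply Prod.ext <;> simp,
      htt 1 1 x y, htt 1 1 y z, htt 1 1 z x,
      htt 1 1 (star x y) (y * z * y⁻¹), htt 1 1 (star y z) (z * x * z⁻¹),
      htt 1 1 (star z x) (x * y * x⁻¹)] at e
    have h := congrArg Prod.snd e
    simpa using h
  · intro x y z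
    have e := htstar.2.2.2.2 ((1, x) : Multiplicative (ZMod p) × QuaternionGroup n) ((1, y) : Multiplicative (ZMod p) × QuaternionGroup n) ((1, z) : Multiplicative (ZMod p) × QuaternionGroup n)
    rw [show ((1, z) : Multiplicative (ZMod p) × QuaternionGroup n) * ((1, x) : Multiplicative (ZMod p) × QuaternionGroup n) * ((1, z) : Multiplicative (ZMod p) × QuaternionGroup n)⁻¹
        = ((1, z * x * z⁻¹) : Multiplicative (ZMod p) × QuaternionGroup n) by apply Prod.ext <;> simp,
      show ((1, z) : Multiplicative (ZMod p) × QuaternionGroup n) * ((1, y) : Multiplicative (ZMod p) × QuaternionGroup n) * ((1, z) : Multiplicative (ZMod p) × QuaternionGroup n)⁻¹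
        = ((1, z * y * z⁻¹) : Multiplicative (ZMod p) × QuaternionGroup n) by apply Prod.ext <;> simp,
      htt 1 1 x y, htt 1 1 (z * x * z⁻¹) (z * y * z⁻¹)] at e
    have h := congrArg Prod.snd e
    simpa using h
  · intro h k x y
    rw [htt h k x y]
    apply Prod.ext <;> simp
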